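/- Define AND on ℤ_p by digit-wise multiplication modulo p: x AND y = Σ_{k≥0} ((x_k · y_k) mod p) p^k, where x_k, y_k are the p-adic digits. Let f : ℤ_p → ℤ_p be 1-Lipschitz with coordinate functions φ_k, none identically zero. Then f(x AND y) = f(x) AND f(y) for all x, y if and only if each φ_k is a monomial: φ_k(x_0,...,x_k) = x_0^{s_0^{(k)}} · x_1^{s_1^{(k)}} ⋯ x_k^{s_k^{(k)}} (mod p) with exponents s_i^{(k)} ∈ {1,...,p-1} (or exponent 0 allowing a variable to be absent). -/

import Mathlib

variable (p : ℕ) [Fact p.Prime]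

/-- The k-th digit of the canonical p-adic expansion of `x`. -/
noncomputable def digit (x : ℤ_[p]) (k : ℕ) : ℕ := x.appr (k + 1) / p ^ k

/-- Digit-wise multiplication modulo `p` on `ℤ_[p]`. -/
noncomputable def pAND (x y : ℤ_[p]) : ℤ_[p] :=
  ∑' k : ℕ, (((digit p x k * digit p y k) % p : ℕ) : ℤ_[p]) * (p : ℤ_[p]) ^ k

variable {p}

lemma appr_unique (x : ℤ_[p]) (n a : ℕ) (ha : a < p ^ n)
    (h : x - a ∈ Ideal.span {(p : ℤ_[p]) ^ n}) : x.appr n = a := by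
  have h2 := x.appr_spec n
  have hd : ((p : ℤ_[p]) ^ n) ∣ ((x.appr n : ℤ_[p]) - a) := by
    have : (x - a) - (x - x.appr n) = (x.appr n : ℤ_[p]) - a := by ring
    rw [← this]
    exact dvd_sub (Ideal.mem_span_singleton.mp h) (Ideal.mem_span_singleton.mp h2)
  have hdz : ((p : ℤ) ^ n) ∣ ((x.appr n : ℤ) - a) := by
    rw [← PadicInt.norm_int_le_pow_iff_dvd]
    have : (((x.appr n : ℤ) - a : ℤ) : ℤ_[p]) = (x.appr n : ℤ_[p]) - a := by push_cast; ring
    rw [this]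
    rw [PadicInt.norm_le_pow_iff_mem_span_pow]
    exact Ideal.mem_span_singleton.mpr hd
  have : ((x.appr n : ℤ) - a) = 0 := by
    apply Int.eq_zero_of_abs_lt_dvd hdz
    have h1 : (x.appr n : ℤ) < (p:ℤ)^n := by exact_mod_cast x.appr_lt n
    have h2a : (a:ℤ) < (p:ℤ)^n := by exact_mod_cast ha
    have h3 : (0:ℤ) ≤ (a:ℤ) := Int.natCast_nonneg a
    have h4 : (0:ℤ) ≤ (x.appr n:ℤ) := Int.natCast_nonneg _
    rw [abs_lt]
    constructor <;> linarith
  omega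

lemma digit_lt (x : ℤ_[p]) (k : ℕ) : digit p x k < p := by
  have h := x.appr_lt (k+1)
  have hp : 0 < p := (Fact.out : p.Prime).pos
  rw [digit, Nat.div_lt_iff_lt_mul (pow_pos hp k)]
  exact h.trans_le (le_of_eq (by ring))

lemma summable_digit_series (c : ℕ → ℕ) :
    Summable (fun k : ℕ => ((c k : ℤ_[p]) * (p : ℤ_[p]) ^ k)) := by
  have hp : (1:ℝ) < p := by exact_mod_cast (Fact.out : p.Prime).one_lt
  apply Summable.of_norm_bounded (g := fun k => ((p:ℝ)⁻¹) ^ k)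
  · apply summable_geometric_of_lt_one (by positivity)
    rw [inv_lt_one_iff₀]; right; exact hp
  · intro k
    calc ‖(c k : ℤ_[p]) * (p:ℤ_[p]) ^ k‖ = ‖(c k : ℤ_[p])‖ * ‖(p:ℤ_[p]) ^ k‖ :=
          norm_mul _ _
    _ ≤ 1 * ‖(p:ℤ_[p]) ^ k‖ :=
          mul_le_mul_of_nonneg_right (PadicInt.norm_le_one _) (norm_nonneg _)
    _ = ((p:ℝ)⁻¹) ^ k := by
          rw [one_mul, PadicInt.norm_p_pow, zpow_neg, zpow_natCast, inv_pow]

lemma partial_sum_lt (c : ℕ → ℕ) (hc : ∀ k, c k < p) (m : ℕ) :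
    ∑ k ∈ Finset.range m, c k * p ^ k < p ^ m := by
  induction m with
  | zero => simp
  | succ m ih =>
    rw [Finset.sum_range_succ]
    calc ∑ k ∈ Finset.range m, c k * p ^ k + c m * p ^ m
        < p ^ m + c m * p ^ m := by omega
    _ = (1 + c m) * p ^ m := by ring
    _ ≤ p * p ^ m := Nat.mul_le_mul_right _ (by have := hc m; omega)
    _ = p ^ (m+1) := by rw [pow_succ, Nat.mul_comm]

lemma appr_tsum (c : ℕ → ℕ) (hc : ∀ k, c k < p) (m : ℕ) :
    (∑' k : ℕ, ((c k : ℤ_[p]) * (p : ℤ_[p]) ^ k)).appr m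
      = ∑ k ∈ Finset.range m, c k * p ^ k := by
  apply appr_unique
  · exact partial_sum_lt c hc m
  · have hs := summable_digit_series (p := p) c
    rw [← Summable.sum_add_tsum_nat_add m hs]
    have : ((∑ k ∈ Finset.range m, c k * p ^ k : ℕ) : ℤ_[p])
        = ∑ k ∈ Finset.range m, (c k : ℤ_[p]) * (p:ℤ_[p]) ^ k := by push_cast; exact Finset.sum_congr rfl (fun _ _ => by ring)
    rw [this, add_sub_cancel_left]
    rw [Ideal.mem_span_singleton]
    have : ∀ k : ℕ, (c (k+m) : ℤ_[p]) * (p:ℤ_[p]) ^ (k+m)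
        = (p:ℤ_[p])^m * ((c (k+m) : ℤ_[p]) * (p:ℤ_[p])^k) := by
      intro k; ring
    rw [tsum_congr this,
      (summable_digit_series (fun k => c (k+m))).tsum_mul_left ((p:ℤ_[p])^m)]
    exact Dvd.intro _ rfl

lemma digit_tsum (c : ℕ → ℕ) (hc : ∀ k, c k < p) (m : ℕ) :
    digit p (∑' k : ℕ, ((c k : ℤ_[p]) * (p : ℤ_[p]) ^ k)) m = c m := by
  rw [digit, appr_tsum c hc, Finset.sum_range_succ]
  have h1 := partial_sum_lt c hc m
  have hp : 0 < p := (Fact.out : p.Prime).pos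
  rw [Nat.add_mul_div_right _ _ (pow_pos hp m), Nat.div_eq_of_lt h1, Nat.zero_add]

lemma digit_pAND (x y : ℤ_[p]) (k : ℕ) :
    digit p (pAND p x y) k = (digit p x k * digit p y k) % p := by
  have hp : 0 < p := (Fact.out : p.Prime).pos
  exact digit_tsum _ (fun k => Nat.mod_lt _ hp) k

lemma appr_succ (x : ℤ_[p]) (k : ℕ) :
    x.appr (k+1) = x.appr k + digit p x k * p ^ k := by
  have hp : 0 < p := (Fact.out : p.Prime).pos
  have hmod : x.appr (k+1) % p ^ k = x.appr k := by
    obtain ⟨t, ht⟩ := x.dvd_appr_sub_appr k (k+1) (Nat.le_succ k)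
    have hmono := x.appr_mono (show k ≤ k + 1 by omega)
    have hlt := x.appr_lt k
    have : x.appr (k+1) = x.appr k + p ^ k * t := by omega
    rw [this, Nat.add_mul_mod_self_left, Nat.mod_eq_of_lt hlt]
  conv_lhs => rw [← Nat.mod_add_div (x.appr (k+1)) (p ^ k)]
  rw [hmod, digit, Nat.mul_comm]

lemma eq_of_digits {x y : ℤ_[p]} (h : ∀ k, digit p x k = digit p y k) : x = y := by
  have happr : ∀ m, x.appr m = y.appr m := by
    intro m
    induction m with
    | zero =>
      have hx := x.appr_lt 0
      have hy := y.appr_lt 0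
      simp only [pow_zero] at hx hy
      omega
    | succ m ih => rw [appr_succ, appr_succ, ih, h m]
  have hnorm : ∀ m : ℕ, ‖x - y‖ ≤ ((p:ℝ)⁻¹) ^ m := by
    intro m
    have h1 : x - y = (x - x.appr m) - (y - y.appr m) := by
      rw [happr m]; ring
    have h2 : ‖x - x.appr m‖ ≤ (p:ℝ) ^ (-m : ℤ) :=
      (PadicInt.norm_le_pow_iff_mem_span_pow _ m).mpr (x.appr_spec m)
    have h3 : ‖y - y.appr m‖ ≤ (p:ℝ) ^ (-m : ℤ) :=
      (PadicInt.norm_le_pow_iff_mem_span_pow _ m).mpr (y.appr_spec m)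
    have h4 : ((p:ℝ)⁻¹) ^ m = (p:ℝ) ^ (-m : ℤ) := by
      rw [zpow_neg, zpow_natCast, inv_pow]
    calc ‖x - y‖ = ‖(x - x.appr m) + -(y - y.appr m)‖ := by rw [h1, sub_eq_add_neg]
    _ ≤ max ‖x - x.appr m‖ ‖-(y - y.appr m)‖ := PadicInt.nonarchimedean _ _
    _ ≤ (p:ℝ) ^ (-m : ℤ) := max_le h2 (by rw [norm_neg]; exact h3)
    _ = ((p:ℝ)⁻¹) ^ m := h4.symm
  have hp : (1:ℝ) < p := by exact_mod_cast (Fact.out : p.Prime).one_lt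
  have hlim : Filter.Tendsto (fun m : ℕ => ((p:ℝ)⁻¹) ^ m) Filter.atTop (nhds 0) := by
    apply tendsto_pow_atTop_nhds_zero_of_lt_one (by positivity)
    rw [inv_lt_one_iff₀]; right; exact hp
  have : ‖x - y‖ ≤ 0 := ge_of_tendsto hlim (Filter.Eventually.of_forall hnorm)
  exact sub_eq_zero.mp (norm_eq_zero.mp (le_antisymm this (norm_nonneg _)))

lemma zmod_hom_pow (ψ : ZMod p →* ZMod p) : ∃ t : ℕ, t ≤ p - 1 ∧ ∀ a, ψ a = a ^ t := by
  have hp : p.Prime := Fact.out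
  obtain ⟨g, hg⟩ := IsCyclic.exists_generator (α := (ZMod p)ˣ)
  set Ψ := Units.map ψ with hΨ
  obtain ⟨t, ht⟩ : ∃ t : ℕ, g ^ t = Ψ g :=
    mem_powers_iff_mem_zpowers.mpr (hg (Ψ g))
  have hunit : ∀ u : (ZMod p)ˣ, ψ (u : ZMod p) = (u : ZMod p) ^ t := by
    intro u
    obtain ⟨m, hm⟩ : ∃ m : ℕ, g ^ m = u :=
      mem_powers_iff_mem_zpowers.mpr (hg u)
    have : Ψ u = u ^ t := by
      rw [← hm, map_pow, ← ht, ← pow_mul, ← pow_mul, Nat.mul_comm]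
    calc ψ (u : ZMod p) = ((Ψ u : (ZMod p)ˣ) : ZMod p) := rfl
    _ = ((u ^ t : (ZMod p)ˣ) : ZMod p) := by rw [this]
    _ = (u : ZMod p) ^ t := Units.val_pow_eq_pow_val u t
  have h0 : ψ 0 = 0 ∨ ψ 0 = 1 := by
    have h1 : ψ 0 * ψ 0 = ψ 0 := by rw [← map_mul, mul_zero]
    have h2 : ψ 0 * (ψ 0 - 1) = 0 := by linear_combination h1
    rcases mul_eq_zero.mp h2 with h | h
    · exact Or.inl h
    · exact Or.inr (by linear_combination h)
  rcases h0 with h0 | h0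
  · -- ψ 0 = 0
    have hp1 : 1 ≤ p - 1 := by have := hp.two_le; omega
    set t' := if t % (p-1) = 0 then p - 1 else t % (p-1) with ht'
    have ht'le : t' ≤ p - 1 := by
      rw [ht']; by_cases h : t % (p-1) = 0
      · rw [if_pos h]
      · rw [if_neg h]
        have : t % (p-1) < p - 1 := Nat.mod_lt _ (by omega)
        omega
    have ht'ne : t' ≠ 0 := by
      rw [ht']; by_cases h : t % (p-1) = 0
      · rw [if_pos h]; omega
      · rw [if_neg h]; exact h
    refine ⟨t', ht'le, fun a => ?_⟩
    rcases eq_or_ne a 0 with rfl | ha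
    · rw [h0, zero_pow ht'ne]
    · obtain ⟨u, rfl⟩ := Ne.isUnit ha
      have hfermat : (u : ZMod p) ^ (p - 1) = 1 := ZMod.pow_card_sub_one_eq_one ha
      rw [hunit u, pow_eq_pow_mod t hfermat, ht']
      by_cases h : t % (p - 1) = 0
      · rw [if_pos h, h, pow_zero, hfermat]
      · rw [if_neg h]
  · -- ψ 0 = 1 : ψ is constant 1
    refine ⟨0, by omega, fun a => ?_⟩
    rw [pow_zero]
    rcases eq_or_ne a 0 with rfl | ha
    · exact h0
    · have hu : IsUnit a := Ne.isUnit ha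
      obtain ⟨u, rfl⟩ := hu
      have h1 : ψ 0 = ψ 0 * ψ (u : ZMod p) := by rw [← map_mul, zero_mul]
      rw [h0, one_mul] at h1
      exact h1.symm

lemma pi_hom_monomial (n : ℕ) (Φ : (Fin n → ZMod p) →* ZMod p) :
    ∃ s : Fin n → ℕ, (∀ i, s i ≤ p - 1) ∧ ∀ v : Fin n → ZMod p, Φ v = ∏ i, v i ^ s i := by
  have key : ∀ i : Fin n, ∃ t : ℕ, t ≤ p - 1 ∧
      ∀ a : ZMod p, Φ (Pi.mulSingle i a) = a ^ t := by
    intro i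
    exact zmod_hom_pow (Φ.comp (MonoidHom.mulSingle (fun _ : Fin n => ZMod p) i))
  choose s hs1 hs2 using key
  refine ⟨s, hs1, fun v => ?_⟩
  calc Φ v = Φ (∏ i, Pi.mulSingle i (v i)) := by rw [Finset.univ_prod_mulSingle]
  _ = ∏ i, Φ (Pi.mulSingle i (v i)) := map_prod Φ _ _
  _ = ∏ i, v i ^ s i := Finset.prod_congr rfl (fun i _ => hs2 i (v i))

lemma digits_realize (k : ℕ) (v : Fin (k+1) → ZMod p) :
    ∃ x : ℤ_[p], ∀ i : Fin (k+1), ((digit p x i : ZMod p)) = v i := by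
  have hp : 0 < p := (Fact.out : p.Prime).pos
  set c : ℕ → ℕ := fun j => if h : j < k+1 then (v ⟨j, h⟩).val else 0 with hc
  have hclt : ∀ j, c j < p := by
    intro j
    rw [hc]
    simp only []
    by_cases h : j < k+1
    · rw [dif_pos h]; exact ZMod.val_lt _
    · rw [dif_neg h]; exact hp
  refine ⟨∑' j : ℕ, ((c j : ℤ_[p]) * (p : ℤ_[p]) ^ j), fun i => ?_⟩
  rw [digit_tsum c hclt i, hc]
  simp only [i.isLt, dif_pos, Fin.eta]
  rw [ZMod.natCast_val, ZMod.cast_id]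

variable (p)

theorem stmt_11 (f : ℤ_[p] → ℤ_[p])
    (hlip : ∀ x y : ℤ_[p], ‖f x - f y‖ ≤ ‖x - y‖)
    (φ : (k : ℕ) → (Fin (k + 1) → ZMod p) → ZMod p)
    (hφ : ∀ (x : ℤ_[p]) (k : ℕ),
      ((digit p (f x) k : ZMod p)) = φ k (fun i => (digit p x i : ZMod p)))
    (hnz : ∀ k : ℕ, ∃ v : Fin (k + 1) → ZMod p, φ k v ≠ 0) :
    (∀ x y : ℤ_[p], f (pAND p x y) = pAND p (f x) (f y)) ↔
      ∀ k : ℕ, ∃ s : Fin (k + 1) → ℕ, (∀ i, s i ≤ p - 1) ∧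
        ∀ v : Fin (k + 1) → ZMod p, φ k v = ∏ i, v i ^ s i := by
  constructor
  · intro hAND k
    have hmul : ∀ v w : Fin (k+1) → ZMod p, φ k (v * w) = φ k v * φ k w := by
      intro v w
      obtain ⟨x, hx⟩ := digits_realize k v
      obtain ⟨y, hy⟩ := digits_realize k w
      have hdAND : (fun i : Fin (k+1) => ((digit p (pAND p x y) i : ZMod p))) = v * w := by
        funext i
        rw [digit_pAND, ZMod.natCast_mod, Nat.cast_mul, hx i, hy i]
        rfl
      have h1 := hφ (pAND p x y) k
      rw [hAND x y, hdAND] at h1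
      have h2 : ((digit p (pAND p (f x) (f y)) k : ZMod p)) = φ k v * φ k w := by
        rw [digit_pAND, ZMod.natCast_mod, Nat.cast_mul, hφ x k, hφ y k]
        congr 1
        · congr 1; funext i; rw [hx i]
        · congr 1; funext i; rw [hy i]
      rw [h2] at h1
      exact h1.symm
    have hone : φ k 1 = 1 := by
      obtain ⟨v0, hv0⟩ := hnz k
      have h := hmul v0 1
      rw [mul_one] at h
      have h' : φ k v0 * 1 = φ k v0 * φ k 1 := by rw [mul_one]; exact h
      exact (mul_left_cancel₀ hv0 h').symm
    obtain ⟨s, hs1, hs2⟩ :=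
      pi_hom_monomial (k+1) ⟨⟨φ k, hone⟩, fun v w => hmul v w⟩
    exact ⟨s, hs1, hs2⟩
  · intro hmono x y
    apply eq_of_digits
    intro k
    obtain ⟨s, hs1, hs2⟩ := hmono k
    have hcast : ((digit p (f (pAND p x y)) k : ZMod p))
        = ((digit p (pAND p (f x) (f y)) k : ZMod p)) := by
      rw [hφ (pAND p x y) k, digit_pAND, ZMod.natCast_mod, Nat.cast_mul, hφ x k, hφ y k,
        hs2, hs2, hs2]
      rw [← Finset.prod_mul_distrib]
      apply Finset.prod_congr rfl
      intro i _
      rw [digit_pAND, ZMod.natCast_mod, Nat.cast_mul, mul_pow]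
    have h1 : (digit p (f (pAND p x y)) k) = ((digit p (f (pAND p x y)) k : ZMod p)).val :=
      (ZMod.val_cast_of_lt (digit_lt _ _)).symm
    have h2 : (digit p (pAND p (f x) (f y)) k) = ((digit p (pAND p (f x) (f y)) k : ZMod p)).val :=
      (ZMod.val_cast_of_lt (digit_lt _ _)).symm
    rw [h1, h2, hcast]
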